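/- Let ε > 0, K > 0, F(z) = (ε+|z|²)^{−1} on ℝ^m, and suppose w, k ∈ ℝ^m satisfy F(w+k) ≤ (1+K²) F(w). Then |F(w+k) − F(w) − ⟨∇F(w), k⟩| ≤ 5(1+K²)|k|² F(w)² + 2(1+K²)|k|³ F(w)^{5/2}. -/

import Mathlib

set_option maxHeartbeats 2000000


open Real Set Filter Topology
open scoped RealInnerProductSpace

/-- quantitative bound on the second order increment of
`F(z) = (ε+|z|²)⁻¹` under `F(w+k) ≤ (1+K²) F(w)`. -/
theorem stmt9 (m : ℕ) (ε K : ℝ) (hε : 0 < ε) (hK : 0 < K)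
    (F : EuclideanSpace ℝ (Fin m) → ℝ)
    (hF : ∀ z, F z = (ε + ‖z‖ ^ 2)⁻¹) :
    ∀ w k : EuclideanSpace ℝ (Fin m), F (w + k) ≤ (1 + K ^ 2) * F w →
      abs (F (w + k) - F w - (inner ℝ ((-2 * (F w) ^ 2) • w) k : ℝ)) ≤
        5 * (1 + K ^ 2) * ‖k‖ ^ 2 * (F w) ^ 2 +
          2 * (1 + K ^ 2) * ‖k‖ ^ 3 * (F w) ^ ((5:ℝ) / 2) := by
  intro w k hle
  set a : ℝ := ε + ‖w‖ ^ 2 with ha_def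
  set b : ℝ := ε + ‖w + k‖ ^ 2 with hb_def
  have ha : 0 < a := by positivity
  have hb : 0 < b := by positivity
  have hFw : F w = a⁻¹ := hF w
  have hFwk : F (w + k) = b⁻¹ := hF (w + k)
  have hK1 : (1:ℝ) ≤ 1 + K ^ 2 := by nlinarith
  set p : ℝ := inner ℝ w k with hp_def
  have hbeq : b = a + (2 * p + ‖k‖ ^ 2) := by
    rw [hb_def, ha_def, @norm_add_sq_real]; ring
  have hinner : (inner ℝ ((-2 * (F w) ^ 2) • w) k : ℝ) = -2 * a⁻¹ ^ 2 * p := by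
    rw [real_inner_smul_left, hFw, hp_def]
  -- a ≤ (1+K²) b
  have hab : a ≤ (1 + K ^ 2) * b := by
    rw [hFw, hFwk] at hle
    have h1 : a * b⁻¹ ≤ (1 + K ^ 2) := by
      calc a * b⁻¹ ≤ a * ((1 + K ^ 2) * a⁻¹) :=
            mul_le_mul_of_nonneg_left hle ha.le
        _ = (1 + K ^ 2) := by field_simp
    calc a = a * b⁻¹ * b := by field_simp
      _ ≤ (1 + K ^ 2) * b := mul_le_mul_of_nonneg_right h1 hb.le
  set s : ℝ := Real.sqrt a with hs_def
  set t : ℝ := Real.sqrt b with ht_def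
  have hs2 : s ^ 2 = a := Real.sq_sqrt ha.le
  have ht2 : t ^ 2 = b := Real.sq_sqrt hb.le
  have hs0 : 0 ≤ s := Real.sqrt_nonneg _
  have ht0 : 0 ≤ t := Real.sqrt_nonneg _
  have hws : ‖w‖ ≤ s := by
    have : ‖w‖ ^ 2 ≤ s ^ 2 := by rw [hs2]; nlinarith [norm_nonneg w]
    nlinarith [norm_nonneg w]
  have hwkt : ‖w + k‖ ≤ t := by
    have : ‖w + k‖ ^ 2 ≤ t ^ 2 := by rw [ht2]; nlinarith [norm_nonneg (w + k)]
    nlinarith [norm_nonneg (w + k)]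
  -- |t - s| ≤ ‖k‖
  have hts1 : t ≤ s + ‖k‖ := by
    have h1 : ‖w + k‖ ≤ ‖w‖ + ‖k‖ := norm_add_le w k
    have h2 : t ^ 2 ≤ (s + ‖k‖) ^ 2 := by
      rw [ht2, hb_def]
      nlinarith [norm_nonneg w, norm_nonneg k, norm_nonneg (w + k), hws]
    nlinarith [norm_nonneg k]
  have hts2 : s ≤ t + ‖k‖ := by
    have h1 : ‖w‖ ≤ ‖w + k‖ + ‖k‖ := by
      have h := abs_norm_sub_norm_le (w + k) w
      rw [add_sub_cancel_left] at h
      have := abs_le.mp h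
      linarith
    have h2 : s ^ 2 ≤ (t + ‖k‖) ^ 2 := by
      rw [hs2, ha_def]
      nlinarith [norm_nonneg k, norm_nonneg (w + k), norm_nonneg w,
        mul_self_le_mul_self (norm_nonneg w) h1,
        mul_le_mul_of_nonneg_right hwkt (norm_nonneg k), ht2]
    nlinarith [norm_nonneg k]
  -- s ≤ sqrt(1+K²) t
  have hsq : s ≤ Real.sqrt (1 + K ^ 2) * t := by
    rw [hs_def, ht_def, ← Real.sqrt_mul (by positivity)]
    exact Real.sqrt_le_sqrt hab
  have hq1 : (1:ℝ) ≤ Real.sqrt (1 + K ^ 2) := by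
    have h := Real.sqrt_le_sqrt hK1
    simpa using h
  have hqsq : Real.sqrt (1 + K ^ 2) ^ 2 = 1 + K ^ 2 := Real.sq_sqrt (by positivity)
  -- key bound : (b-a)^2 ≤ 4 (1+K²) ‖k‖² b
  have hkey : (b - a) ^ 2 ≤ 4 * (1 + K ^ 2) * ‖k‖ ^ 2 * b := by
    have hfac : (b - a) ^ 2 = (t - s) ^ 2 * (t + s) ^ 2 := by
      rw [← hs2, ← ht2]; ring
    have h1 : (t - s) ^ 2 ≤ ‖k‖ ^ 2 := by nlinarith
    have h2 : (t + s) ^ 2 ≤ 4 * (1 + K ^ 2) * b := by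
      have h3 : t + s ≤ 2 * Real.sqrt (1 + K ^ 2) * t := by nlinarith
      have h4 : (t + s) ^ 2 ≤ (2 * Real.sqrt (1 + K ^ 2) * t) ^ 2 := by
        nlinarith
      calc (t + s) ^ 2 ≤ (2 * Real.sqrt (1 + K ^ 2) * t) ^ 2 := h4
        _ = 4 * (1 + K ^ 2) * b := by rw [← ht2]; linear_combination 4 * t ^ 2 * hqsq
    calc (b - a) ^ 2 = (t - s) ^ 2 * (t + s) ^ 2 := hfac
      _ ≤ ‖k‖ ^ 2 * (4 * (1 + K ^ 2) * b) := by
          apply mul_le_mul h1 h2 (by positivity) (by positivity)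
      _ = 4 * (1 + K ^ 2) * ‖k‖ ^ 2 * b := by ring
  -- rewrite the expression
  have hp' : p = (b - a - ‖k‖ ^ 2) / 2 := by rw [hbeq]; ring
  have hexpr : b⁻¹ - a⁻¹ - (-2 * a⁻¹ ^ 2 * p) =
      ((b - a) ^ 2 - ‖k‖ ^ 2 * b) / (a ^ 2 * b) := by
    rw [hp']; field_simp; ring
  rw [hinner, hFwk, hFw, hexpr]
  have hmain : |((b - a) ^ 2 - ‖k‖ ^ 2 * b) / (a ^ 2 * b)| ≤
      5 * (1 + K ^ 2) * ‖k‖ ^ 2 * a⁻¹ ^ 2 := by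
    rw [abs_div, abs_of_pos (by positivity : (0:ℝ) < a ^ 2 * b)]
    rw [div_le_iff₀ (by positivity)]
    have habs : |(b - a) ^ 2 - ‖k‖ ^ 2 * b| ≤ (b - a) ^ 2 + ‖k‖ ^ 2 * b := by
      have := abs_sub ((b - a) ^ 2) (‖k‖ ^ 2 * b)
      calc |(b - a) ^ 2 - ‖k‖ ^ 2 * b| ≤ |(b - a) ^ 2| + |‖k‖ ^ 2 * b| :=
            abs_sub _ _
        _ = (b - a) ^ 2 + ‖k‖ ^ 2 * b := by
            rw [abs_of_nonneg (by positivity), abs_of_nonneg (by positivity)]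
    have h5 : (b - a) ^ 2 + ‖k‖ ^ 2 * b ≤ 5 * (1 + K ^ 2) * ‖k‖ ^ 2 * b := by
      nlinarith [hkey, sq_nonneg ‖k‖, hb.le, mul_nonneg (sq_nonneg ‖k‖) hb.le]
    calc |(b - a) ^ 2 - ‖k‖ ^ 2 * b| ≤ (b - a) ^ 2 + ‖k‖ ^ 2 * b := habs
      _ ≤ 5 * (1 + K ^ 2) * ‖k‖ ^ 2 * b := h5
      _ = 5 * (1 + K ^ 2) * ‖k‖ ^ 2 * a⁻¹ ^ 2 * (a ^ 2 * b) := by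
          field_simp
  have hpos : 0 ≤ 2 * (1 + K ^ 2) * ‖k‖ ^ 3 * a⁻¹ ^ ((5:ℝ) / 2) := by
    have : (0:ℝ) ≤ a⁻¹ ^ ((5:ℝ) / 2) := Real.rpow_nonneg (by positivity) _
    positivity
  linarith
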